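/- Suppose for each ℓ ∈ {1,…,L}: Π_ℓ : [0,1] → ℝ^{d×d} is differentiable, symmetric-matrix valued, and satisfies Π̇_ℓ − Π_ℓ a Π_ℓ + Q_ℓ + (A_ℓ − Σ_m Ā_{ℓm})ᵀ Π_ℓ + Π_ℓ (A_ℓ − Σ_m Ā_{ℓm}) = 0 on [0,1]; n_ℓ, m_ℓ : [0,1] → ℝ^d and Σ_ℓ : [0,1] → ℝ^{d×d} (symmetric-valued) are differentiable; and the n_ℓ satisfy ṅ_ℓ + (A_ℓ − Σ_m Ā_{ℓm} − a Π_ℓ)ᵀ n_ℓ + Σ_m Ā_{ℓm} n_m − Σ_m (Π_ℓ Ā_{ℓm} + Ā_{ℓm} Π_m) m_m = 0 on [0,1]. Then there exist differentiable functions c_ℓ : [0,1] → ℝ such that the quadratic functions λ_ℓ(t,x) = −½ xᵀ Π_ℓ(t) x + n_ℓ(t)ᵀ x + c_ℓ(t) satisfy, for every ℓ and every (t,x) ∈ [0,1] × ℝ^d, the equation ∂_t λ_ℓ(t,x) + ½ ∇λ_ℓ(t,x)ᵀ a ∇λ_ℓ(t,x) − ½ xᵀ Q_ℓ x + ∇λ_ℓ(t,x)ᵀ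 A_ℓ x − ∇λ_ℓ(t,x)ᵀ Σ_m Ā_{ℓm}(x − m_m(t)) − Σ_m [(n_m(t) − Π_m(t) m_m(t))ᵀ Ā_{mℓ} (m_m(t) − x) − Tr(Π_m(t) Ā_{mℓ} Σ_m(t))] − (ε/2) Tr(a Π_ℓ(t)) = 0, where ∇λ_ℓ(t,x) = −Π_ℓ(t) x + n_ℓ(t). -/

import Mathlib

open Matrix

noncomputable section

namespace Stmt11

set_option maxHeartbeats 1600000


lemma contAt_sum {ι : Type*} (s : Finset ι) {f : ι → ℝ → ℝ} {u : ℝ}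
    (h : ∀ i ∈ s, ContinuousAt (f i) u) : ContinuousAt (fun t => ∑ i ∈ s, f i t) u :=
  tendsto_finset_sum s h


lemma flip {d : ℕ} (M : Matrix (Fin d) (Fin d) ℝ) (u v : Fin d → ℝ) :
    (M *ᵥ u) ⬝ᵥ v = u ⬝ᵥ (Mᵀ *ᵥ v) := by
  calc (M *ᵥ u) ⬝ᵥ v = v ⬝ᵥ (M *ᵥ u) := dotProduct_comm _ _
    _ = (v ᵥ* M) ⬝ᵥ u := dotProduct_mulVec v M u
    _ = u ⬝ᵥ (v ᵥ* M) := dotProduct_comm _ _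
    _ = u ⬝ᵥ (Mᵀ *ᵥ v) := by rw [Matrix.mulVec_transpose]

lemma symm_flip {d : ℕ} {M : Matrix (Fin d) (Fin d) ℝ} (hM : Mᵀ = M) (u v : Fin d → ℝ) :
    u ⬝ᵥ (M *ᵥ v) = (M *ᵥ u) ⬝ᵥ v := by
  conv_lhs => rw [← hM]
  exact (flip M u v).symm

lemma dot_sum {d L : ℕ} (v : Fin d → ℝ) (w : Fin L → Fin d → ℝ) :
    v ⬝ᵥ (∑ m, w m) = ∑ m, v ⬝ᵥ w m := by
  simp only [dotProduct, Finset.sum_apply, Finset.mul_sum]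
  exact Finset.sum_comm

lemma sum_dot {d L : ℕ} (v : Fin d → ℝ) (w : Fin L → Fin d → ℝ) :
    (∑ m, w m) ⬝ᵥ v = ∑ m, w m ⬝ᵥ v := by
  rw [dotProduct_comm, dot_sum]
  simp [dotProduct_comm]

lemma sum_mulVec {d L : ℕ} (M : Fin L → Matrix (Fin d) (Fin d) ℝ) (v : Fin d → ℝ) :
    (∑ m, M m) *ᵥ v = ∑ m, M m *ᵥ v := by
  ext i
  simp only [mulVec, dotProduct, Finset.sum_apply, Matrix.sum_apply, Finset.sum_mul]
  exact Finset.sum_comm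

lemma mulVec_sumv {d L : ℕ} (M : Matrix (Fin d) (Fin d) ℝ) (w : Fin L → Fin d → ℝ) :
    M *ᵥ (∑ m, w m) = ∑ m, M *ᵥ w m := by
  ext i
  simp only [mulVec, Finset.sum_apply]
  exact dot_sum _ _

lemma key {d L : ℕ} (ℓ : Fin L) (ε : ℝ)
    (a : Matrix (Fin d) (Fin d) ℝ) (ha : aᵀ = a)
    (A : Matrix (Fin d) (Fin d) ℝ)
    (Abar : Fin L → Fin L → Matrix (Fin d) (Fin d) ℝ)
    (hAbarSymm : ∀ l m, (Abar l m)ᵀ = Abar l m)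
    (hAbarExch : ∀ l m, Abar l m = Abar m l)
    (Q : Matrix (Fin d) (Fin d) ℝ)
    (P : Fin L → Matrix (Fin d) (Fin d) ℝ) (hP : ∀ m, (P m)ᵀ = P m)
    (P' : Matrix (Fin d) (Fin d) ℝ)
    (N : Fin L → Fin d → ℝ) (N' : Fin d → ℝ)
    (M : Fin L → Fin d → ℝ)
    (tr : Fin L → ℝ) (trP : ℝ)
    (hRic : P' - P ℓ * a * P ℓ + Q + (A - ∑ m, Abar ℓ m)ᵀ * P ℓ
        + P ℓ * (A - ∑ m, Abar ℓ m) = 0)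
    (hn : N' + (A - ∑ m, Abar ℓ m - a * P ℓ)ᵀ *ᵥ N ℓ + (∑ m, Abar ℓ m *ᵥ N m)
        - (∑ m, (P ℓ * Abar ℓ m + Abar ℓ m * P m) *ᵥ M m) = 0)
    (x : Fin d → ℝ) :
    (-(1/2) * (x ⬝ᵥ (P' *ᵥ x)) + N' ⬝ᵥ x +
       (-((1/2) * (N ℓ ⬝ᵥ (a *ᵥ N ℓ)) + N ℓ ⬝ᵥ (∑ m, Abar ℓ m *ᵥ M m)
          - (∑ m, ((N m - P m *ᵥ M m) ⬝ᵥ (Abar m ℓ *ᵥ M m) - tr m))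
          - (ε/2) * trP)))
      + (1/2) * ((-(P ℓ *ᵥ x) + N ℓ) ⬝ᵥ (a *ᵥ (-(P ℓ *ᵥ x) + N ℓ)))
      - (1/2) * (x ⬝ᵥ (Q *ᵥ x))
      + (-(P ℓ *ᵥ x) + N ℓ) ⬝ᵥ (A *ᵥ x)
      - (-(P ℓ *ᵥ x) + N ℓ) ⬝ᵥ (∑ m, Abar ℓ m *ᵥ (x - M m))
      - (∑ m, ((N m - P m *ᵥ M m) ⬝ᵥ (Abar m ℓ *ᵥ (M m - x)) - tr m))
      - (ε/2) * trP = 0 := by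
  have eP' : P' = P ℓ * a * P ℓ - Q - (A - ∑ m, Abar ℓ m)ᵀ * P ℓ
      - P ℓ * (A - ∑ m, Abar ℓ m) := by
    rw [← sub_eq_zero, ← hRic]; abel
  have eN' : N' = -((A - ∑ m, Abar ℓ m - a * P ℓ)ᵀ *ᵥ N ℓ) - (∑ m, Abar ℓ m *ᵥ N m)
      + (∑ m, (P ℓ * Abar ℓ m + Abar ℓ m * P m) *ᵥ M m) := by
    rw [← sub_eq_zero, ← hn]; abel
  have hExch : ∀ m, Abar m ℓ = Abar ℓ m := fun m => hAbarExch m ℓ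
  rw [eP', eN']
  simp only [hExch]
  simp only [Matrix.transpose_sub, Matrix.transpose_mul, Matrix.transpose_sum,
    Matrix.transpose_transpose, ha, hP, hAbarSymm,
    Matrix.sub_mulVec, Matrix.add_mulVec, Matrix.neg_mulVec,
    Matrix.mulVec_sub, Matrix.mulVec_add, Matrix.mulVec_neg,
    ← Matrix.mulVec_mulVec, sum_mulVec, dot_sum, sum_dot, flip,
    dotProduct_add, add_dotProduct, dotProduct_sub, sub_dotProduct,
    dotProduct_neg, neg_dotProduct,
    mulVec_sumv, Finset.sum_add_distrib, Finset.sum_sub_distrib]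
  have r1 : x ⬝ᵥ (P ℓ *ᵥ (a *ᵥ N ℓ)) = N ℓ ⬝ᵥ (a *ᵥ (P ℓ *ᵥ x)) := by
    calc x ⬝ᵥ (P ℓ *ᵥ (a *ᵥ N ℓ)) = (P ℓ *ᵥ x) ⬝ᵥ (a *ᵥ N ℓ) := symm_flip (hP ℓ) _ _
      _ = (a *ᵥ N ℓ) ⬝ᵥ (P ℓ *ᵥ x) := dotProduct_comm _ _
      _ = N ℓ ⬝ᵥ (aᵀ *ᵥ (P ℓ *ᵥ x)) := flip _ _ _
      _ = N ℓ ⬝ᵥ (a *ᵥ (P ℓ *ᵥ x)) := by rw [ha]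
  have r2 : x ⬝ᵥ (Aᵀ *ᵥ (P ℓ *ᵥ x)) = x ⬝ᵥ (P ℓ *ᵥ (A *ᵥ x)) :=
    calc x ⬝ᵥ (Aᵀ *ᵥ (P ℓ *ᵥ x)) = (A *ᵥ x) ⬝ᵥ (P ℓ *ᵥ x) := (flip A x _).symm
      _ = (P ℓ *ᵥ x) ⬝ᵥ (A *ᵥ x) := dotProduct_comm _ _
      _ = x ⬝ᵥ (P ℓ *ᵥ (A *ᵥ x)) := (symm_flip (hP ℓ) x _).symm
  have r3 : (∑ m, x ⬝ᵥ (Abar ℓ m *ᵥ (P ℓ *ᵥ x)))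
      = ∑ m, x ⬝ᵥ (P ℓ *ᵥ (Abar ℓ m *ᵥ x)) := by
    refine Finset.sum_congr rfl fun m _ => ?_
    calc x ⬝ᵥ (Abar ℓ m *ᵥ (P ℓ *ᵥ x)) = (Abar ℓ m *ᵥ x) ⬝ᵥ (P ℓ *ᵥ x) :=
          symm_flip (hAbarSymm ℓ m) _ _
      _ = (P ℓ *ᵥ x) ⬝ᵥ (Abar ℓ m *ᵥ x) := dotProduct_comm _ _
      _ = x ⬝ᵥ (P ℓ *ᵥ (Abar ℓ m *ᵥ x)) := (symm_flip (hP ℓ) x _).symm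
  have r4 : (∑ m, M m ⬝ᵥ (Abar ℓ m *ᵥ (P ℓ *ᵥ x)))
      = ∑ m, x ⬝ᵥ (P ℓ *ᵥ (Abar ℓ m *ᵥ M m)) := by
    refine Finset.sum_congr rfl fun m _ => ?_
    calc M m ⬝ᵥ (Abar ℓ m *ᵥ (P ℓ *ᵥ x)) = (Abar ℓ m *ᵥ M m) ⬝ᵥ (P ℓ *ᵥ x) :=
          symm_flip (hAbarSymm ℓ m) _ _
      _ = (P ℓ *ᵥ x) ⬝ᵥ (Abar ℓ m *ᵥ M m) := dotProduct_comm _ _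
      _ = x ⬝ᵥ (P ℓ *ᵥ (Abar ℓ m *ᵥ M m)) := (symm_flip (hP ℓ) x _).symm
  rw [r1, r2, r3, r4]
  ring


/-- The quadratic multiplier `λ_ℓ(t,x) = -½ xᵀ Π_ℓ(t) x + n_ℓ(t)ᵀ x + c_ℓ(t)`. -/
def lam {d : ℕ} (Pm : ℝ → Matrix (Fin d) (Fin d) ℝ) (n : ℝ → (Fin d → ℝ))
    (c : ℝ → ℝ) (t : ℝ) (x : Fin d → ℝ) : ℝ :=
  -(1 / 2) * (x ⬝ᵥ (Pm t *ᵥ x)) + n t ⬝ᵥ x + c t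

/-- Its spatial gradient `∇λ_ℓ(t,x) = -Π_ℓ(t) x + n_ℓ(t)`. -/
def gradLam {d : ℕ} (Pm : ℝ → Matrix (Fin d) (Fin d) ℝ) (n : ℝ → (Fin d → ℝ))
    (t : ℝ) (x : Fin d → ℝ) : Fin d → ℝ :=
  -(Pm t *ᵥ x) + n t

/-- In the linear-quadratic multi-species setting, if the `Π_ℓ`
solve the Riccati equations and the `n_ℓ` solve the linear equations stated in the
optimality system, then there exist differentiable `c_ℓ : [0,1] → ℝ` such that the
quadratic functions `λ_ℓ(t,x) = -½ xᵀΠ_ℓ(t)x + n_ℓ(t)ᵀx + c_ℓ(t)` satisfy the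
Hamilton–Jacobi-type optimality PDE with the Gaussian convolution and integral terms
evaluated in closed form. -/
theorem statement_11 {d p L : ℕ} (hL : 1 ≤ L) (ε : ℝ) (hε : 0 < ε)
    (σm : Matrix (Fin d) (Fin p) ℝ)
    (A : Fin L → Matrix (Fin d) (Fin d) ℝ)
    (Abar : Fin L → Fin L → Matrix (Fin d) (Fin d) ℝ)
    (hAbarSymm : ∀ ℓ m, (Abar ℓ m).IsSymm)
    (hAbarExch : ∀ ℓ m, Abar ℓ m = Abar m ℓ)
    (Q : Fin L → Matrix (Fin d) (Fin d) ℝ) (hQ : ∀ ℓ, (Q ℓ).IsSymm)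
    (Pm Pm' : Fin L → ℝ → Matrix (Fin d) (Fin d) ℝ)
    (hPderiv : ∀ ℓ, ∀ t ∈ Set.Icc (0 : ℝ) 1, ∀ i j,
      HasDerivAt (fun s => Pm ℓ s i j) (Pm' ℓ t i j) t)
    (hPsymm : ∀ ℓ, ∀ t ∈ Set.Icc (0 : ℝ) 1, (Pm ℓ t).IsSymm)
    (hRiccati : ∀ ℓ, ∀ t ∈ Set.Icc (0 : ℝ) 1,
      Pm' ℓ t - Pm ℓ t * (σm * σmᵀ) * Pm ℓ t + Q ℓ
        + (A ℓ - ∑ m, Abar ℓ m)ᵀ * Pm ℓ t + Pm ℓ t * (A ℓ - ∑ m, Abar ℓ m) = 0)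
    (n n' mv mv' : Fin L → ℝ → (Fin d → ℝ))
    (Sm Sm' : Fin L → ℝ → Matrix (Fin d) (Fin d) ℝ)
    (hnderiv : ∀ ℓ, ∀ t ∈ Set.Icc (0 : ℝ) 1, ∀ i,
      HasDerivAt (fun s => n ℓ s i) (n' ℓ t i) t)
    (hmderiv : ∀ ℓ, ∀ t ∈ Set.Icc (0 : ℝ) 1, ∀ i,
      HasDerivAt (fun s => mv ℓ s i) (mv' ℓ t i) t)
    (hSderiv : ∀ ℓ, ∀ t ∈ Set.Icc (0 : ℝ) 1, ∀ i j,
      HasDerivAt (fun s => Sm ℓ s i j) (Sm' ℓ t i j) t)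
    (hSsymm : ∀ ℓ, ∀ t ∈ Set.Icc (0 : ℝ) 1, (Sm ℓ t).IsSymm)
    (hneq : ∀ ℓ, ∀ t ∈ Set.Icc (0 : ℝ) 1,
      n' ℓ t + (A ℓ - ∑ m, Abar ℓ m - (σm * σmᵀ) * Pm ℓ t)ᵀ *ᵥ n ℓ t
        + (∑ m, Abar ℓ m *ᵥ n m t)
        - (∑ m, (Pm ℓ t * Abar ℓ m + Abar ℓ m * Pm m t) *ᵥ mv m t) = 0) :
    ∃ c : Fin L → ℝ → ℝ,
      (∀ ℓ, ∀ t ∈ Set.Icc (0 : ℝ) 1, DifferentiableAt ℝ (c ℓ) t) ∧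
      ∀ ℓ, ∀ t ∈ Set.Icc (0 : ℝ) 1, ∀ x : Fin d → ℝ,
        deriv (fun s => lam (Pm ℓ) (n ℓ) (c ℓ) s x) t
          + (1 / 2) * (gradLam (Pm ℓ) (n ℓ) t x ⬝ᵥ ((σm * σmᵀ) *ᵥ gradLam (Pm ℓ) (n ℓ) t x))
          - (1 / 2) * (x ⬝ᵥ (Q ℓ *ᵥ x))
          + gradLam (Pm ℓ) (n ℓ) t x ⬝ᵥ (A ℓ *ᵥ x)
          - gradLam (Pm ℓ) (n ℓ) t x ⬝ᵥ (∑ m, Abar ℓ m *ᵥ (x - mv m t))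
          - (∑ m, ((n m t - Pm m t *ᵥ mv m t) ⬝ᵥ (Abar m ℓ *ᵥ (mv m t - x))
              - (Pm m t * Abar m ℓ * Sm m t).trace))
          - (ε / 2) * ((σm * σmᵀ) * Pm ℓ t).trace = 0 := by
  classical
  set a : Matrix (Fin d) (Fin d) ℝ := σm * σmᵀ with ha_def
  have ha : aᵀ = a := by rw [ha_def, Matrix.transpose_mul, Matrix.transpose_transpose]
  set proj : ℝ → ℝ := fun s => max 0 (min 1 s) with hproj_def
  have hprojmem : ∀ s, proj s ∈ Set.Icc (0:ℝ) 1 := fun s =>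
    ⟨le_max_left _ _, max_le (by norm_num) (min_le_left _ _)⟩
  have hprojcont : Continuous proj := continuous_const.max (continuous_const.min continuous_id)
  have hprojt : ∀ t ∈ Set.Icc (0:ℝ) 1, proj t = t := by
    intro t ht
    simp only [hproj_def]
    rw [min_eq_right ht.2, max_eq_right ht.1]
  set K : Fin L → ℝ → ℝ := fun l s =>
    -((1/2) * (n l s ⬝ᵥ (a *ᵥ n l s))
      + n l s ⬝ᵥ (∑ m, Abar l m *ᵥ mv m s)
      - (∑ m, ((n m s - Pm m s *ᵥ mv m s) ⬝ᵥ (Abar m l *ᵥ mv m s)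
          - (Pm m s * Abar m l * Sm m s).trace))
      - (ε/2) * (a * Pm l s).trace) with hKdef
  have hKcont : ∀ l, ∀ u ∈ Set.Icc (0:ℝ) 1, ContinuousAt (K l) u := by
    intro l u hu
    have hPc : ∀ m (i j : Fin d), ContinuousAt (fun s => Pm m s i j) u :=
      fun m i j => (hPderiv m u hu i j).continuousAt
    have hnc : ∀ m (i : Fin d), ContinuousAt (fun s => n m s i) u :=
      fun m i => (hnderiv m u hu i).continuousAt
    have hmc : ∀ m (i : Fin d), ContinuousAt (fun s => mv m s i) u :=
      fun m i => (hmderiv m u hu i).continuousAt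
    have hSc : ∀ m (i j : Fin d), ContinuousAt (fun s => Sm m s i j) u :=
      fun m i j => (hSderiv m u hu i j).continuousAt
    simp only [hKdef, dotProduct, Matrix.mulVec, Matrix.trace, Matrix.diag,
      Matrix.mul_apply, Finset.sum_apply, Pi.sub_apply]
    repeat'
      first
      | exact hPc _ _ _
      | exact hnc _ _
      | exact hmc _ _
      | exact hSc _ _ _
      | exact continuousAt_const
      | apply ContinuousAt.neg
      | apply ContinuousAt.add
      | apply ContinuousAt.sub
      | apply ContinuousAt.mul
      | apply contAt_sum
      | intro i hi
  have hKc : ∀ l, Continuous (fun s => K l (proj s)) := by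
    intro l
    rw [continuous_iff_continuousAt]
    intro s
    exact (hKcont l (proj s) (hprojmem s)).comp hprojcont.continuousAt
  have hcD : ∀ l t, HasDerivAt (fun u => ∫ s in (0:ℝ)..u, K l (proj s)) (K l (proj t)) t :=
    fun l t => ((hKc l).integral_hasStrictDerivAt 0 t).hasDerivAt
  refine ⟨fun l t => ∫ s in (0:ℝ)..t, K l (proj s), ?_, ?_⟩
  · exact fun l t _ => (hcD l t).differentiableAt
  intro l t ht x
  have hKt : HasDerivAt (fun u => ∫ s in (0:ℝ)..u, K l (proj s)) (K l t) t := by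
    have h := hcD l t
    rwa [hprojt t ht] at h
  have hq : HasDerivAt (fun s => x ⬝ᵥ (Pm l s *ᵥ x)) (x ⬝ᵥ (Pm' l t *ᵥ x)) t := by
    simp only [dotProduct, Matrix.mulVec]
    exact HasDerivAt.fun_sum fun i _ =>
      (HasDerivAt.fun_sum fun j _ => (hPderiv l t ht i j).mul_const (x j)).const_mul (x i)
  have hnx : HasDerivAt (fun s => n l s ⬝ᵥ x) (n' l t ⬝ᵥ x) t := by
    simp only [dotProduct]
    exact HasDerivAt.fun_sum fun i _ => (hnderiv l t ht i).mul_const (x i)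
  have hlam : HasDerivAt
      (fun s => lam (Pm l) (n l) (fun u => ∫ s in (0:ℝ)..u, K l (proj s)) s x)
      (-(1 / 2) * (x ⬝ᵥ (Pm' l t *ᵥ x)) + n' l t ⬝ᵥ x + K l t) t := by
    simp only [lam]
    exact ((HasDerivAt.const_mul (-(1/2) : ℝ) hq).add hnx).add hKt
  rw [hlam.deriv]
  have hgoal := key l ε a ha (A l) Abar (fun l m => hAbarSymm l m)
    (fun l m => hAbarExch l m) (Q l) (fun m => Pm m t) (fun m => hPsymm m t ht)
    (Pm' l t) (fun m => n m t) (n' l t) (fun m => mv m t)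
    (fun m => (Pm m t * Abar m l * Sm m t).trace) ((a * Pm l t).trace)
    (hRiccati l t ht) (hneq l t ht) x
  simpa only [gradLam, hKdef] using hgoal


end Stmt11
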